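/- Let $M^*$ be a real symmetric $(n-1)\times(n-1)$ matrix with last diagonal entry $0$, and let $M$ be the $n \times n$ symmetric matrix obtained by duplicating the last row/column of $M^*$ with all entries scaled by $1/\sqrt{2}$, and setting the $2\times 2$ bottom-right block to zero. Then the characteristic polynomial of $M$ equals $x$ times the characteristic polynomial of $M^*$. -/

import Mathlib

open Polynomial

lemma charpoly_conj_aux {n : Type*} [Fintype n] [DecidableEq n]
    (P Q M : Matrix n n ℝ) (hPQ : P * Q = 1) (hQP : Q * P = 1) :
    (P * M * Q).charpoly = M.charpoly := by
  have hP' : (P.map (C : ℝ →+* ℝ[X])) * (Q.map C) = 1 := by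
    rw [← Matrix.map_mul, hPQ, Matrix.map_one _ (map_zero _) (map_one _)]
  have hcomm : ∀ N : Matrix n n ℝ[X],
      N * Matrix.scalar n (X : ℝ[X]) = Matrix.scalar n (X : ℝ[X]) * N := by
    intro N
    exact (Matrix.scalar_commute (X : ℝ[X]) (fun r => mul_comm _ _) N).symm
  have key : Matrix.charmatrix (P * M * Q)
      = (P.map C) * Matrix.charmatrix M * (Q.map C) := by
    unfold Matrix.charmatrix
    rw [Matrix.mul_sub, Matrix.sub_mul]
    congr 1
    · rw [hcomm (P.map C), mul_assoc, hP', mul_one]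
    · simp only [RingHom.mapMatrix_apply, Matrix.map_mul, mul_assoc]
  unfold Matrix.charpoly
  rw [key, Matrix.det_mul, Matrix.det_mul]
  have hdet : (P.map (C : ℝ →+* ℝ[X])).det * (Q.map C).det = 1 := by
    rw [← Matrix.det_mul, hP', Matrix.det_one]
  calc (P.map (C : ℝ →+* ℝ[X])).det * (Matrix.charmatrix M).det * (Q.map C).det
      = (Matrix.charmatrix M).det * ((P.map C).det * (Q.map C).det) := by ring
    _ = (Matrix.charmatrix M).det := by rw [hdet, mul_one]

theorem charpoly_false_twin_diag_zero (m : ℕ)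
    (A : Matrix (Fin m) (Fin m) ℝ) (hA : A.IsSymm) (b : Fin m → ℝ) :
    (Matrix.fromBlocks A
        (Matrix.of fun i (_ : Fin 2) => b i / Real.sqrt 2)
        (Matrix.of fun (_ : Fin 2) j => b j / Real.sqrt 2)
        (Matrix.of fun (_ : Fin 2) (_ : Fin 2) => (0 : ℝ))).charpoly =
      X * (Matrix.fromBlocks A
        (Matrix.of fun i (_ : Fin 1) => b i)
        (Matrix.of fun (_ : Fin 1) j => b j)
        (Matrix.of fun (_ : Fin 1) (_ : Fin 1) => (0 : ℝ))).charpoly := by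
  set s : ℝ := Real.sqrt 2 with hs
  have hs2 : s * s = 2 := Real.mul_self_sqrt (by norm_num)
  have hspos : (0 : ℝ) < s := Real.sqrt_pos.mpr (by norm_num)
  have hsne : s ≠ 0 := ne_of_gt hspos
  set R : Matrix (Fin 2) (Fin 2) ℝ := !![1/s, 1/s; 1/s, -(1/s)] with hR
  set P : Matrix (Fin m ⊕ Fin 2) (Fin m ⊕ Fin 2) ℝ :=
    Matrix.fromBlocks 1 0 0 R with hP
  have hRR : R * R = 1 := by
    rw [hR]
    ext i j
    fin_cases i <;> fin_cases j <;>
      simp [Matrix.mul_apply, Fin.sum_univ_two, Matrix.one_apply] <;>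
      field_simp <;> nlinarith [hs2]
  have hPP : P * P = 1 := by
    rw [hP, Matrix.fromBlocks_multiply]
    simp [hRR, Matrix.fromBlocks_one]
  set M : Matrix (Fin m ⊕ Fin 2) (Fin m ⊕ Fin 2) ℝ :=
    Matrix.fromBlocks A
        (Matrix.of fun i (_ : Fin 2) => b i / s)
        (Matrix.of fun (_ : Fin 2) j => b j / s)
        (Matrix.of fun (_ : Fin 2) (_ : Fin 2) => (0 : ℝ)) with hM
  set Mstar : Matrix (Fin m ⊕ Fin 1) (Fin m ⊕ Fin 1) ℝ :=
    Matrix.fromBlocks A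
        (Matrix.of fun i (_ : Fin 1) => b i)
        (Matrix.of fun (_ : Fin 1) j => b j)
        (Matrix.of fun (_ : Fin 1) (_ : Fin 1) => (0 : ℝ)) with hMstar
  have step1 : M.charpoly = (P * M * P).charpoly :=
    (charpoly_conj_aux P P M hPP hPP).symm
  have hPMP : P * M * P = Matrix.fromBlocks A
      (Matrix.of fun i (k : Fin 2) => if k = 0 then b i else 0)
      (Matrix.of fun (k : Fin 2) j => if k = 0 then b j else 0)
      (0 : Matrix (Fin 2) (Fin 2) ℝ) := by
    rw [hP, hM, Matrix.fromBlocks_multiply, Matrix.fromBlocks_multiply]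
    ext i j
    obtain (i|i) := i <;> obtain (j|j) := j
    · simp
    · fin_cases j <;>
        simp [hR, Matrix.mul_apply, Fin.sum_univ_two, Matrix.vecHead, Matrix.vecTail] <;>
        field_simp <;> linear_combination (-b i) * hs2
    · fin_cases i <;>
        simp [hR, Matrix.mul_apply, Fin.sum_univ_two, Matrix.vecHead, Matrix.vecTail] <;>
        field_simp <;> linear_combination (-b j) * hs2
    · fin_cases i <;> fin_cases j <;>
        simp [hR, Matrix.mul_apply, Fin.sum_univ_two, Matrix.vecHead, Matrix.vecTail]
  set e : (Fin m ⊕ Fin 2) ≃ ((Fin m ⊕ Fin 1) ⊕ Fin 1) :=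
    ((Equiv.refl (Fin m)).sumCongr finSumFinEquiv.symm).trans
      (Equiv.sumAssoc (Fin m) (Fin 1) (Fin 1)).symm with he
  have step2 : Matrix.reindex e e (P * M * P) =
      Matrix.fromBlocks Mstar 0 0 (0 : Matrix (Fin 1) (Fin 1) ℝ) := by
    rw [hPMP]
    ext i j
    obtain (⟨i|i⟩|i) := i <;> obtain (⟨j|j⟩|j) := j <;>
      simp [he, hMstar, Matrix.reindex_apply, Matrix.submatrix_apply,
        Equiv.sumAssoc, Equiv.sumCongr, finSumFinEquiv,
        Fin.fin_one_eq_zero, Matrix.fromBlocks]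
  have step3 : (P * M * P).charpoly =
      (Matrix.fromBlocks Mstar 0 0 (0 : Matrix (Fin 1) (Fin 1) ℝ)).charpoly := by
    rw [← step2, Matrix.charpoly_reindex]
  have h0 : (0 : Matrix (Fin 1) (Fin 1) ℝ).charpoly = X := by
    simp [Matrix.charpoly, Matrix.det_fin_one]
  rw [step1, step3, Matrix.charpoly_fromBlocks_zero₂₁, h0, mul_comm]
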